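/- Let ψ₁ = (φ₁, υ₁) and ψ₂ = (φ₂, υ₂) be solution pairs to a hybrid system H = (C, f, D, g) with ψ₁ compact. Then the concatenation ψ = (φ, υ) = ψ₁|ψ₂ satisfies: for each j ∈ ℕ such that I^j_ψ := {t : (t,j) ∈ dom ψ} has nonempty interior, (d/dt)φ(t,j) = f(φ(t,j), υ(t,j)) for almost all t ∈ I^j_ψ. -/

import Mathlib

open MeasureTheory Set

noncomputable section

/-- State/input space: `ℝ^k` with the Euclidean norm. -/
abbrev Vec (k : ℕ) : Type := EuclideanSpace ℝ (Fin k)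

/-- A set `E ⊆ ℝ × ℕ` is a compact hybrid time domain if
`E = ⋃_{j=0}^{J} ([t_j, t_{j+1}] × {j})` for some `J ∈ ℕ` and a finite nondecreasing
sequence `0 = t_0 ≤ t_1 ≤ ... ≤ t_{J+1}`. -/
def IsCompactHTD (E : Set (ℝ × ℕ)) : Prop :=
  ∃ (J : ℕ) (t : ℕ → ℝ), t 0 = 0 ∧ (∀ i, i ≤ J → t i ≤ t (i + 1)) ∧
    E = ⋃ j ∈ Finset.range (J + 1), Set.Icc (t j) (t (j + 1)) ×ˢ ({j} : Set ℕ)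

/-- A hybrid time domain is the union of a nondecreasing sequence of compact
hybrid time domains. -/
def IsHTD (E : Set (ℝ × ℕ)) : Prop :=
  ∃ F : ℕ → Set (ℝ × ℕ), (∀ k, IsCompactHTD (F k)) ∧ Monotone F ∧ E = ⋃ k, F k

/-- The time slice `I^j = {t : (t,j) ∈ E}`. -/
def Slice (E : Set (ℝ × ℕ)) (j : ℕ) : Set ℝ := {t | (t, j) ∈ E}

/-- `(T,J) = max E` for a (compact) hybrid time domain `E`. -/
def IsMaxOf (E : Set (ℝ × ℕ)) (T : ℝ) (J : ℕ) : Prop :=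
  (T, J) ∈ E ∧ ∀ p ∈ E, p.1 ≤ T ∧ p.2 ≤ J

/-- `s` is Lebesgue measurable on `S`: preimages (within `S`) of open sets are
Lebesgue measurable subsets of `ℝ`. -/
def LebesgueMeasurableOn {k : ℕ} (s : ℝ → Vec k) (S : Set ℝ) : Prop :=
  ∀ U : Set (Vec k), IsOpen U → NullMeasurableSet {t | t ∈ S ∧ s t ∈ U} volume

/-- `s` is locally essentially bounded on `S`. -/
def LocallyEssBddOn {k : ℕ} (s : ℝ → Vec k) (S : Set ℝ) : Prop :=
  ∀ r ∈ S, ∃ U : Set ℝ, IsOpen U ∧ r ∈ U ∧ ∃ c : ℝ, 0 ≤ c ∧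
    ∀ᵐ t ∂(volume.restrict (U ∩ S)), ‖s t‖ ≤ c

/-- `s` is absolutely continuous on `[a,b]`: for each `ε > 0` there is `δ > 0` such
that every countable collection of disjoint subintervals of `[a,b]` of total length
at most `δ` has total variation of `s` at most `ε`. -/
def AbsContOn {k : ℕ} (s : ℝ → Vec k) (a b : ℝ) : Prop :=
  ∀ ε : ℝ, 0 < ε → ∃ δ : ℝ, 0 < δ ∧ ∀ I : ℕ → ℝ × ℝ,
    (∀ i, a ≤ (I i).1 ∧ (I i).1 ≤ (I i).2 ∧ (I i).2 ≤ b) →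
    (∀ i i', i ≠ i' → Disjoint (Set.Ioo (I i).1 (I i).2) (Set.Ioo (I i').1 (I i').2)) →
    (∑' i, ((I i).2 - (I i).1)) ≤ δ →
    (∑' i, ‖s (I i).2 - s (I i).1‖) ≤ ε

/-- `s` is locally absolutely continuous on `S`: absolutely continuous on every
compact subinterval of `S`. -/
def LocAbsContOn {k : ℕ} (s : ℝ → Vec k) (S : Set ℝ) : Prop :=
  ∀ a b : ℝ, a ≤ b → Set.Icc a b ⊆ S → AbsContOn s a b

/-- `s` is locally bounded on `S`. -/
def LocallyBoundedOn {k : ℕ} (s : ℝ → Vec k) (S : Set ℝ) : Prop :=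
  ∀ t₀ ∈ S, ∃ A ∈ nhds t₀, ∃ M : ℝ, 0 < M ∧ ∀ t ∈ A ∩ S, ‖s t‖ ≤ M

/-- A hybrid input: a function on a hybrid time domain `E` that is Lebesgue measurable
and locally essentially bounded on each time slice. -/
def IsHybridInput {m : ℕ} (υ : ℝ → ℕ → Vec m) (E : Set (ℝ × ℕ)) : Prop :=
  IsHTD E ∧ ∀ j : ℕ,
    LebesgueMeasurableOn (fun t => υ t j) (Slice E j) ∧
    LocallyEssBddOn (fun t => υ t j) (Slice E j)

/-- A hybrid arc: a function on a hybrid time domain `E` that is locally absolutely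
continuous on each time slice. -/
def IsHybridArc {n : ℕ} (φ : ℝ → ℕ → Vec n) (E : Set (ℝ × ℕ)) : Prop :=
  IsHTD E ∧ ∀ j : ℕ, LocAbsContOn (fun t => φ t j) (Slice E j)

/-- A hybrid system `H = (C, f, D, g)`. -/
structure HybridSystem (n m : ℕ) where
  C : Set (Vec n × Vec m)
  f : Vec n × Vec m → Vec n
  D : Set (Vec n × Vec m)
  g : Vec n × Vec m → Vec n

/-- `(φ, υ)` with common domain `E` is a solution pair to `H`. -/
def IsSolutionPair {n m : ℕ} (H : HybridSystem n m)
    (φ : ℝ → ℕ → Vec n) (υ : ℝ → ℕ → Vec m) (E : Set (ℝ × ℕ)) : Prop :=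
  IsHybridArc φ E ∧ IsHybridInput υ E ∧
  (φ 0 0, υ 0 0) ∈ closure H.C ∪ H.D ∧
  (∀ j : ℕ, (interior (Slice E j)).Nonempty →
    (∀ t ∈ interior (Slice E j), (φ t j, υ t j) ∈ H.C) ∧
    (∀ᵐ t ∂(volume.restrict (Slice E j)),
      HasDerivWithinAt (fun s => φ s j) (H.f (φ t j, υ t j)) (Slice E j) t)) ∧
  (∀ p : ℝ × ℕ, p ∈ E → (p.1, p.2 + 1) ∈ E →
    (φ p.1 p.2, υ p.1 p.2) ∈ H.D ∧ φ p.1 (p.2 + 1) = H.g (φ p.1 p.2, υ p.1 p.2))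

/-- Backward-in-time jump map `g^bw(x,u) = {z : x = g(z,u), (z,u) ∈ D}`. -/
def gbw {n m : ℕ} (H : HybridSystem n m) (x : Vec n) (u : Vec m) : Set (Vec n) :=
  {z | x = H.g (z, u) ∧ (z, u) ∈ H.D}

/-- Backward-in-time jump set `D^bw`. -/
def Dbw {n m : ℕ} (H : HybridSystem n m) : Set (Vec n × Vec m) :=
  {p | ∃ z : Vec n, p.1 = H.g (z, p.2) ∧ (z, p.2) ∈ H.D}

/-- `(φ, υ)` with common domain `E` is a solution pair to the backward-in-time
system `H^bw = (C, -f, D^bw, g^bw)` of `H` (the jump inclusion is set-valued). -/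
def IsBwSolutionPair {n m : ℕ} (H : HybridSystem n m)
    (φ : ℝ → ℕ → Vec n) (υ : ℝ → ℕ → Vec m) (E : Set (ℝ × ℕ)) : Prop :=
  IsHybridArc φ E ∧ IsHybridInput υ E ∧
  (φ 0 0, υ 0 0) ∈ closure H.C ∪ Dbw H ∧
  (∀ j : ℕ, (interior (Slice E j)).Nonempty →
    (∀ t ∈ interior (Slice E j), (φ t j, υ t j) ∈ H.C) ∧
    (∀ᵐ t ∂(volume.restrict (Slice E j)),
      HasDerivWithinAt (fun s => φ s j) (-(H.f (φ t j, υ t j))) (Slice E j) t)) ∧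
  (∀ p : ℝ × ℕ, p ∈ E → (p.1, p.2 + 1) ∈ E →
    (φ p.1 p.2, υ p.1 p.2) ∈ Dbw H ∧ φ p.1 (p.2 + 1) ∈ gbw H (φ p.1 p.2) (υ p.1 p.2))

/-- Minkowski sum `E + {(T,J)}`. -/
def Shift (E : Set (ℝ × ℕ)) (T : ℝ) (J : ℕ) : Set (ℝ × ℕ) :=
  {p | ∃ q ∈ E, p = (q.1 + T, q.2 + J)}

/-- `ψ` with domain `E` is the concatenation `ψ₁|ψ₂`, where `(T,J) = max E₁`. -/
def IsConcat {α : Type*} (T : ℝ) (J : ℕ)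
    (ψ₁ : ℝ → ℕ → α) (E₁ : Set (ℝ × ℕ))
    (ψ₂ : ℝ → ℕ → α) (E₂ : Set (ℝ × ℕ))
    (ψ : ℝ → ℕ → α) (E : Set (ℝ × ℕ)) : Prop :=
  E = E₁ ∪ Shift E₂ T J ∧
  (∀ p ∈ E₁, p ≠ (T, J) → ψ p.1 p.2 = ψ₁ p.1 p.2) ∧
  (∀ p ∈ Shift E₂ T J, ψ p.1 p.2 = ψ₂ (p.1 - T) (p.2 - J))

/-- Minkowski difference `{(T,J)} − E`. -/
def RevDom (E : Set (ℝ × ℕ)) (T : ℝ) (J : ℕ) : Set (ℝ × ℕ) :=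
  {p | ∃ q ∈ E, p = (T - q.1, J - q.2)}

/-- `(φ', υ')` with domain `E'` is the reversal of the compact pair `(φ, υ)` with
domain `E` and `(T,J) = max E`; `C` is the flow set used in the closure condition
on `υ'(0,0)`. -/
def IsReversal {n m : ℕ} (C : Set (Vec n × Vec m)) (T : ℝ) (J : ℕ)
    (φ : ℝ → ℕ → Vec n) (υ : ℝ → ℕ → Vec m) (E : Set (ℝ × ℕ))
    (φ' : ℝ → ℕ → Vec n) (υ' : ℝ → ℕ → Vec m) (E' : Set (ℝ × ℕ)) : Prop :=
  E' = RevDom E T J ∧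
  (∀ p ∈ E', φ' p.1 p.2 = φ (T - p.1) (J - p.2)) ∧
  (∀ j : ℕ, ∀ t ∈ interior (Slice E' j), υ' t j = υ (T - t) (J - j)) ∧
  ((interior (Slice E' 0)).Nonempty → (φ' 0 0, υ' 0 0) ∈ closure C) ∧
  (∀ p : ℝ × ℕ, p ∈ E' → (p.1, p.2 + 1) ∈ E' → υ' p.1 p.2 = υ (T - p.1) (J - (p.2 + 1)))

/-- Lipschitz flow assumption with constants `Kx, Ku`. -/
def LipschitzFlow {n m : ℕ} (H : HybridSystem n m) (Kx Ku : ℝ) : Prop :=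
  0 < Kx ∧ 0 < Ku ∧
  ∀ (x₀ x₁ : Vec n) (u₀ u₁ : Vec m),
    (x₀, u₀) ∈ H.C → (x₁, u₀) ∈ H.C → (x₀, u₁) ∈ H.C →
    ‖H.f (x₀, u₀) - H.f (x₁, u₀)‖ ≤ Kx * ‖x₀ - x₁‖ ∧
    ‖H.f (x₀, u₀) - H.f (x₀, u₁)‖ ≤ Ku * ‖u₀ - u₁‖

/-- Linearly bounded jump map assumption with constants `Kx, Ku`. -/
def LinearBoundedJump {n m : ℕ} (H : HybridSystem n m) (Kx Ku : ℝ) : Prop :=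
  0 < Kx ∧ 0 < Ku ∧
  ∀ (x₀ x₁ : Vec n) (u₀ u₁ : Vec m), (x₀, u₀) ∈ H.D → (x₁, u₁) ∈ H.D →
    ‖H.g (x₀, u₀) - H.g (x₁, u₁)‖ ≤ Kx * ‖x₀ - x₁‖ + Ku * ‖u₀ - u₁‖

/-- `φ` with domain `F ⊆ E'` is a reconstructed solution with input `υ'` (defined on
`E'`) and initial condition `x0`: it starts at `x0`, flows according to
`f(·, υ')` on each nondegenerate slice, and jumps according to `g(·, υ')`. -/
def IsReconSolution {n m : ℕ} (H : HybridSystem n m)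
    (υ' : ℝ → ℕ → Vec m) (E' : Set (ℝ × ℕ)) (x0 : Vec n)
    (φ : ℝ → ℕ → Vec n) (F : Set (ℝ × ℕ)) : Prop :=
  F ⊆ E' ∧ (0, 0) ∈ F ∧ φ 0 0 = x0 ∧ IsHTD F ∧
  (∀ j : ℕ, LocAbsContOn (fun t => φ t j) (Slice F j)) ∧
  (∀ j : ℕ, (interior (Slice F j)).Nonempty →
    ∀ᵐ t ∂(volume.restrict (Slice F j)),
      HasDerivWithinAt (fun s => φ s j) (H.f (φ t j, υ' t j)) (Slice F j) t) ∧
  (∀ p : ℝ × ℕ, p ∈ F → (p.1, p.2 + 1) ∈ F →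
    φ p.1 (p.2 + 1) = H.g (φ p.1 p.2, υ' p.1 p.2))

/-- A maximal reconstructed solution: one admitting no proper extension. -/
def IsMaximalRecon {n m : ℕ} (H : HybridSystem n m)
    (υ' : ℝ → ℕ → Vec m) (E' : Set (ℝ × ℕ)) (x0 : Vec n)
    (φ : ℝ → ℕ → Vec n) (F : Set (ℝ × ℕ)) : Prop :=
  IsReconSolution H υ' E' x0 φ F ∧
  ∀ (φ₂ : ℝ → ℕ → Vec n) (F₂ : Set (ℝ × ℕ)),
    IsReconSolution H υ' E' x0 φ₂ F₂ → F ⊆ F₂ →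
    (∀ p ∈ F, φ₂ p.1 p.2 = φ p.1 p.2) → F₂ = F

lemma slice_union (X Y : Set (ℝ × ℕ)) (j : ℕ) :
    Slice (X ∪ Y) j = Slice X j ∪ Slice Y j := rfl

lemma slice_shift_lt {E : Set (ℝ × ℕ)} {T : ℝ} {J j : ℕ} (h : j < J) :
    Slice (Shift E T J) j = ∅ := by
  ext t
  simp only [Slice, Shift, Set.mem_setOf_eq, Set.mem_empty_iff_false, iff_false]
  rintro ⟨q, hq, heq⟩
  have := congrArg Prod.snd heq
  simp at this
  omega

lemma slice_shift_ge {E : Set (ℝ × ℕ)} {T : ℝ} {J j : ℕ} (h : J ≤ j) :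
    Slice (Shift E T J) j = (fun t => t - T) ⁻¹' (Slice E (j - J)) := by
  ext t
  simp only [Slice, Shift, Set.mem_setOf_eq, Set.mem_preimage]
  constructor
  · rintro ⟨q, hq, heq⟩
    have h1 : t = q.1 + T := congrArg Prod.fst heq
    have h2 : j = q.2 + J := congrArg Prod.snd heq
    have : (t - T, j - J) = q := by
      rw [h1, h2]; simp
    rwa [this]
  · intro hq
    exact ⟨(t - T, j - J), hq, by simp [Nat.sub_add_cancel h]⟩

lemma compactHTD_slice {E : Set (ℝ × ℕ)} (h : IsCompactHTD E) (j : ℕ) :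
    Slice E j = ∅ ∨ ∃ a b : ℝ, Slice E j = Set.Icc a b := by
  obtain ⟨J, t, ht0, hmono, hE⟩ := h
  by_cases hj : j < J + 1
  · right
    refine ⟨t j, t (j + 1), ?_⟩
    ext s
    simp only [Slice, hE, Set.mem_setOf_eq, Set.mem_iUnion, Set.mem_prod, Set.mem_singleton_iff,
      Finset.mem_range]
    constructor
    · rintro ⟨i, hi, hmem, hji⟩; subst hji; exact hmem
    · intro hs; exact ⟨j, hj, hs, rfl⟩
  · left
    ext s
    simp only [Slice, hE, Set.mem_setOf_eq, Set.mem_iUnion, Set.mem_prod, Set.mem_singleton_iff,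
      Finset.mem_range, Set.mem_empty_iff_false, iff_false, not_exists]
    intro i hi hc
    omega

lemma compactHTD_nonneg {E : Set (ℝ × ℕ)} (h : IsCompactHTD E) :
    ∀ p ∈ E, 0 ≤ p.1 := by
  obtain ⟨J, t, ht0, hmono, hE⟩ := h
  have key : ∀ i, i ≤ J + 1 → 0 ≤ t i := by
    intro i
    induction i with
    | zero => intro _; simp [ht0]
    | succ i ih => intro hi; exact (ih (by omega)).trans (hmono i (by omega))
  intro p hp
  rw [hE] at hp
  simp only [Set.mem_iUnion, Set.mem_prod, Set.mem_singleton_iff, Finset.mem_range] at hp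
  obtain ⟨i, hi, hmem, _⟩ := hp
  exact (key i (by omega)).trans hmem.1

lemma slice_iUnion (F : ℕ → Set (ℝ × ℕ)) (j : ℕ) :
    Slice (⋃ k, F k) j = ⋃ k, Slice (F k) j := by
  ext t; simp [Slice]

lemma htd_slice_measurable {E : Set (ℝ × ℕ)} (h : IsHTD E) (j : ℕ) :
    MeasurableSet (Slice E j) := by
  obtain ⟨F, hF, _, hE⟩ := h
  rw [hE, slice_iUnion]
  refine MeasurableSet.iUnion (fun k => ?_)
  rcases compactHTD_slice (hF k) j with h | ⟨a, b, h⟩ <;> rw [h]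
  · exact MeasurableSet.empty
  · exact measurableSet_Icc

lemma icc_null {a b : ℝ} (h : interior (Set.Icc a b) = ∅) : volume (Set.Icc a b) = 0 := by
  rw [interior_Icc] at h
  have hba : ¬ a < b := Set.Ioo_eq_empty_iff.mp h
  rw [Real.volume_Icc]
  exact ENNReal.ofReal_eq_zero.mpr (by linarith [not_lt.mp hba])

lemma htd_slice_null {E : Set (ℝ × ℕ)} (h : IsHTD E) (j : ℕ)
    (hint : interior (Slice E j) = ∅) : volume (Slice E j) = 0 := by
  obtain ⟨F, hF, _, hE⟩ := h
  rw [hE, slice_iUnion] at hint ⊢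
  refine measure_iUnion_null (fun k => ?_)
  have hsub : interior (Slice (F k) j) = ∅ :=
    Set.eq_empty_of_subset_empty (hint ▸ interior_mono (Set.subset_iUnion (fun k => Slice (F k) j) k))
  rcases compactHTD_slice (hF k) j with h | ⟨a, b, h⟩ <;> rw [h]
  · simp
  · exact icc_null (h ▸ hsub)

lemma htd_nonneg {E : Set (ℝ × ℕ)} (h : IsHTD E) : ∀ p ∈ E, 0 ≤ p.1 := by
  obtain ⟨F, hF, _, hE⟩ := h
  intro p hp
  rw [hE] at hp
  obtain ⟨k, hk⟩ := Set.mem_iUnion.mp hp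
  exact compactHTD_nonneg (hF k) p hk

lemma hasDerivWithinAt_comp_sub {k : ℕ} {f : ℝ → Vec k} {v : Vec k} {S : Set ℝ} {T s : ℝ}
    (h : HasDerivWithinAt f v S s) :
    HasDerivWithinAt (fun t => f (t - T)) v ((fun t => t - T) ⁻¹' S) (s + T) := by
  have hg : HasDerivWithinAt (fun t : ℝ => t - T) 1 ((fun t => t - T) ⁻¹' S) (s + T) :=
    (hasDerivWithinAt_id _ _).sub_const T
  have h' : HasDerivWithinAt f v S ((s + T) - T) := by simpa using h
  have := h'.scomp (s + T) hg (Set.mapsTo_preimage _ _)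
  rw [one_smul] at this
  exact this

/-- Lemma 11: if `ψ₁` and `ψ₂` are solution pairs to `H` with `ψ₁` compact, then the
concatenation `ψ = (φ, υ) = ψ₁|ψ₂` satisfies the flow dynamics: for each `j` with
`I^j_ψ` of nonempty interior, `(d/dt)φ(t,j) = f(φ(t,j), υ(t,j))` for almost all
`t ∈ I^j_ψ`. -/
theorem concat_flow_dynamics {n m : ℕ} (H : HybridSystem n m)
    (φ₁ : ℝ → ℕ → Vec n) (υ₁ : ℝ → ℕ → Vec m) (E₁ : Set (ℝ × ℕ))
    (φ₂ : ℝ → ℕ → Vec n) (υ₂ : ℝ → ℕ → Vec m) (E₂ : Set (ℝ × ℕ))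
    (φ : ℝ → ℕ → Vec n) (υ : ℝ → ℕ → Vec m) (E : Set (ℝ × ℕ))
    (T : ℝ) (J : ℕ)
    (h₁ : IsSolutionPair H φ₁ υ₁ E₁)
    (h₂ : IsSolutionPair H φ₂ υ₂ E₂)
    (hcpt : IsCompactHTD E₁)
    (hmax : IsMaxOf E₁ T J)
    (hφ : IsConcat T J φ₁ E₁ φ₂ E₂ φ E)
    (hυ : IsConcat T J υ₁ E₁ υ₂ E₂ υ E) :
    ∀ j : ℕ, (interior (Slice E j)).Nonempty →
      ∀ᵐ t ∂(volume.restrict (Slice E j)),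
        HasDerivWithinAt (fun s => φ s j) (H.f (φ t j, υ t j)) (Slice E j) t := by

  intro j _
  obtain ⟨hE, hφ1, hφ2⟩ := hφ
  obtain ⟨-, hυ1, hυ2⟩ := hυ
  have hE₂htd : IsHTD E₂ := h₂.1.1
  have hS : Slice E j = Slice E₁ j ∪ Slice (Shift E₂ T J) j := by
    rw [hE, slice_union]
  have hAstruct := compactHTD_slice hcpt j
  have hAmeas : MeasurableSet (Slice E₁ j) := by
    rcases hAstruct with h | ⟨a, b, h⟩ <;> rw [h]
    exacts [MeasurableSet.empty, measurableSet_Icc]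
  have hBmeas : MeasurableSet (Slice (Shift E₂ T J) j) := by
    rcases lt_or_ge j J with hj | hj
    · rw [slice_shift_lt hj]; exact MeasurableSet.empty
    · rw [slice_shift_ge hj]
      exact (htd_slice_measurable hE₂htd _).preimage (measurable_id.sub_const T)
  have hSmeas : MeasurableSet (Slice E j) := by rw [hS]; exact hAmeas.union hBmeas
  have hAIic : Slice E₁ j ⊆ Set.Iic T := fun t ht => (hmax.2 (t, j) ht).1
  have hBIci : Slice (Shift E₂ T J) j ⊆ Set.Ici T := by
    intro t ht
    rcases lt_or_ge j J with hj | hj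
    · rw [slice_shift_lt hj] at ht; exact absurd ht (Set.notMem_empty t)
    · rw [slice_shift_ge hj] at ht
      have h0 : (0 : ℝ) ≤ t - T := htd_nonneg hE₂htd (t - T, j - J) ht
      simp only [Set.mem_Ici]
      linarith
  have hA_ae : ∀ᵐ t ∂volume.restrict (Slice E₁ j),
      HasDerivWithinAt (fun s => φ s j) (H.f (φ t j, υ t j)) (Slice E j) t := by
    by_cases hint : (interior (Slice E₁ j)).Nonempty
    · have hD := (h₁.2.2.2.1 j hint).2
      have hmem := ae_restrict_mem (μ := volume) hAmeas
      have hneT : ∀ᵐ t ∂volume.restrict (Slice E₁ j), ((t, j) : ℝ × ℕ) ≠ (T, J) := by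
        rw [ae_iff]
        have hsub : {t : ℝ | ¬ ((t, j) : ℝ × ℕ) ≠ (T, J)} ⊆ {T} := by
          intro t ht
          simp only [Set.mem_setOf_eq, not_not] at ht
          have h1 : t = T := congrArg Prod.fst ht
          simp [h1]
        refine le_antisymm (le_trans (measure_mono hsub) ?_) zero_le
        rw [Measure.restrict_apply' hAmeas]
        exact le_trans (measure_mono Set.inter_subset_left)
          (le_of_eq Real.volume_singleton)
      filter_upwards [hD, hmem, hneT] with t hDt htA hne
      have hjJ : j ≤ J := (hmax.2 (t, j) htA).2
      have hkey : (Slice E₁ j ∩ {t' : ℝ | ((t', j) : ℝ × ℕ) ≠ (T, J)}) ∈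
          nhdsWithin t (Slice E j) := by
        rw [hS, mem_nhdsWithin]
        rcases lt_or_eq_of_le hjJ with hj | hj
        · refine ⟨Set.univ, isOpen_univ, trivial, ?_⟩
          rintro s ⟨-, hs | hs⟩
          · refine ⟨hs, fun hc => ?_⟩
            have h2 : j = J := congrArg Prod.snd hc
            omega
          · rw [slice_shift_lt hj] at hs; exact absurd hs (Set.notMem_empty s)
        · have htT : t < T := by
            refine lt_of_le_of_ne (hAIic htA) (fun h => hne ?_)
            rw [h, hj]
          refine ⟨Set.Iio T, isOpen_Iio, htT, ?_⟩
          rintro s ⟨hsT, hs | hs⟩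
          · exact ⟨hs, fun hc => absurd (congrArg Prod.fst hc : s = T) (ne_of_lt hsT)⟩
          · exact absurd (Set.mem_Ici.mp (hBIci hs)) (not_le.mpr hsT)
      have hA_nhds : Slice E₁ j ∈ nhdsWithin t (Slice E j) :=
        Filter.mem_of_superset hkey Set.inter_subset_left
      have hD' : HasDerivWithinAt (fun s => φ₁ s j) (H.f (φ₁ t j, υ₁ t j)) (Slice E j) t :=
        hDt.mono_of_mem_nhdsWithin hA_nhds
      have heq : (fun s => φ s j) =ᶠ[nhdsWithin t (Slice E j)] (fun s => φ₁ s j) :=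
        Filter.eventually_of_mem hkey (fun s hs => hφ1 (s, j) hs.1 hs.2)
      have heqt : φ t j = φ₁ t j := hφ1 (t, j) htA hne
      have hvalt : υ t j = υ₁ t j := hυ1 (t, j) htA hne
      rw [heqt, hvalt]
      exact hD'.congr_of_eventuallyEq heq heqt
    · have h0 : volume (Slice E₁ j) = 0 := by
        rcases hAstruct with h | ⟨a, b, h⟩ <;> rw [h]
        · simp
        · exact icc_null (by rw [← h]; exact Set.not_nonempty_iff_eq_empty.mp hint)
      rw [Measure.restrict_eq_zero.mpr h0]
      simp
  have hB_ae : ∀ᵐ t ∂volume.restrict (Slice (Shift E₂ T J) j),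
      HasDerivWithinAt (fun s => φ s j) (H.f (φ t j, υ t j)) (Slice E j) t := by
    rcases lt_or_ge j J with hj | hj
    · rw [slice_shift_lt hj]
      simp
    · have hBeq : Slice (Shift E₂ T J) j = (fun t => t - T) ⁻¹' (Slice E₂ (j - J)) :=
        slice_shift_ge hj
      have hsubT : (fun t : ℝ => t - T) = (fun t : ℝ => t + (-T)) := by funext t; ring
      by_cases hint : (interior (Slice E₂ (j - J))).Nonempty
      · have hD2 := (h₂.2.2.2.1 (j - J) hint).2
        have hS₂meas : MeasurableSet (Slice E₂ (j - J)) := htd_slice_measurable hE₂htd _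
        set Bad : Set ℝ := {s : ℝ | ¬ HasDerivWithinAt (fun r => φ₂ r (j - J))
            (H.f (φ₂ s (j - J), υ₂ s (j - J))) (Slice E₂ (j - J)) s} ∩ Slice E₂ (j - J)
          with hBad_def
        have hN : volume Bad = 0 := by
          have h1 := ae_iff.mp hD2
          rwa [Measure.restrict_apply' hS₂meas] at h1
        have hpre : volume ((fun t : ℝ => t - T) ⁻¹' Bad) = 0 := by
          rw [hsubT, measure_preimage_add_right]
          exact hN
        have hclaim : ∀ t ∈ Slice (Shift E₂ T J) j, t ≠ T →
            HasDerivWithinAt (fun r => φ₂ r (j - J))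
              (H.f (φ₂ (t - T) (j - J), υ₂ (t - T) (j - J))) (Slice E₂ (j - J)) (t - T) →
            HasDerivWithinAt (fun s => φ s j) (H.f (φ t j, υ t j)) (Slice E j) t := by
          intro t htB htT hQ
          have htgt : T < t := lt_of_le_of_ne (hBIci htB) (Ne.symm htT)
          have hB_nhds : Slice (Shift E₂ T J) j ∈ nhdsWithin t (Slice E j) := by
            rw [hS, mem_nhdsWithin]
            refine ⟨Set.Ioi T, isOpen_Ioi, htgt, ?_⟩
            rintro s ⟨hsT, hs | hs⟩
            · exact absurd (Set.mem_Iic.mp (hAIic hs)) (not_le.mpr hsT)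
            · exact hs
          have hD' := hasDerivWithinAt_comp_sub (T := T) hQ
          rw [sub_add_cancel, ← hBeq] at hD'
          have hD'' := hD'.mono_of_mem_nhdsWithin hB_nhds
          have heq : (fun s => φ s j) =ᶠ[nhdsWithin t (Slice E j)]
              (fun r => φ₂ (r - T) (j - J)) :=
            Filter.eventually_of_mem hB_nhds (fun s hs => hφ2 (s, j) hs)
          have heqt : φ t j = φ₂ (t - T) (j - J) := hφ2 (t, j) htB
          have hvalt : υ t j = υ₂ (t - T) (j - J) := hυ2 (t, j) htB
          rw [heqt, hvalt]
          exact hD''.congr_of_eventuallyEq heq heqt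
        rw [ae_iff, Measure.restrict_apply' hBmeas]
        have hsub : {t : ℝ | ¬ HasDerivWithinAt (fun s => φ s j)
              (H.f (φ t j, υ t j)) (Slice E j) t} ∩ Slice (Shift E₂ T J) j ⊆
            ((fun t : ℝ => t - T) ⁻¹' Bad) ∪ {T} := by
          rintro t ⟨hbad, htB⟩
          by_cases htT : t = T
          · exact Or.inr (by simp [htT])
          · refine Or.inl ⟨fun hQ => hbad (hclaim t htB htT hQ), ?_⟩
            have h2 := htB
            rw [hBeq] at h2
            exact h2
        refine le_antisymm (le_trans (measure_mono hsub) ?_) zero_le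
        refine le_trans (measure_union_le _ _) ?_
        rw [hpre, Real.volume_singleton, add_zero]
      · have h0 : volume (Slice E₂ (j - J)) = 0 :=
          htd_slice_null hE₂htd _ (Set.not_nonempty_iff_eq_empty.mp hint)
        have hB0 : volume (Slice (Shift E₂ T J) j) = 0 := by
          rw [hBeq, hsubT, measure_preimage_add_right]
          exact h0
        rw [Measure.restrict_eq_zero.mpr hB0]
        simp
  rw [ae_iff] at hA_ae hB_ae ⊢
  rw [Measure.restrict_apply' hAmeas] at hA_ae
  rw [Measure.restrict_apply' hBmeas] at hB_ae
  rw [Measure.restrict_apply' hSmeas]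
  nth_rewrite 2 [hS]
  rw [Set.inter_union_distrib_left]
  refine le_antisymm (le_trans (measure_union_le _ _) ?_) zero_le
  rw [hA_ae, hB_ae, add_zero]
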